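/- A connected quandle is medial if and only if it is isomorphic (as a binary algebra) to an affine quandle Aff(A,f) for some abelian group A and automorphism f of A. -/

import Mathlib

/-- The set of left translations of a binary algebra `(Q, op)`, viewed as permutations:
permutations `f` such that `f x = op a x` for some `a`. -/
def translations {Q : Type*} (op : Q → Q → Q) : Set (Equiv.Perm Q) :=
  { f | ∃ a : Q, ∀ x : Q, f x = op a x }

/-- The (left) multiplication group `LMlt(Q)`: the subgroup of the symmetric group
generated by the left translations. -/
def LMlt {Q : Type*} (op : Q → Q → Q) : Subgroup (Equiv.Perm Q) :=
  Subgroup.closure (translations op)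

/-- The displacement group `Dis(Q)`: the subgroup generated by all `L_a * L_b⁻¹`. -/
def Dis {Q : Type*} (op : Q → Q → Q) : Subgroup (Equiv.Perm Q) :=
  Subgroup.closure { f | ∃ g ∈ translations op, ∃ h ∈ translations op, f = g * h⁻¹ }

/-- `(Q, op)` is a quandle: idempotent, left distributive, left quasigroup. -/
def IsQuandle {Q : Type*} (op : Q → Q → Q) : Prop :=
  (∀ x, op x x = x) ∧
  (∀ x y z, op x (op y z) = op (op x y) (op x z)) ∧
  (∀ x y, ∃! u, op x u = y)

/-- `(Q, op)` is medial. -/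
def IsMedial {Q : Type*} (op : Q → Q → Q) : Prop :=
  ∀ x y u v, op (op x y) (op u v) = op (op x u) (op y v)

/-- The orbit of `e` under the multiplication group. -/
def qOrbit {Q : Type*} (op : Q → Q → Q) (e : Q) : Set Q :=
  { y | ∃ f ∈ LMlt op, f e = y }

/-- The orbit of `e` under the displacement group. -/
def disOrbit {Q : Type*} (op : Q → Q → Q) (e : Q) : Set Q :=
  { y | ∃ f ∈ Dis op, f e = y }


universe u

section Helpers

variable {Q : Type u} (op : Q → Q → Q) (hQ : IsQuandle op)

include hQ

lemma op_bijective (a : Q) : Function.Bijective (op a) := by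
  constructor
  · intro u v huv
    obtain ⟨w, -, hw⟩ := hQ.2.2 a (op a u)
    rw [hw u rfl, hw v huv.symm]
  · intro y
    obtain ⟨w, hw, -⟩ := hQ.2.2 a y
    exact ⟨w, hw⟩

/-- The left translation by `a` as a permutation. -/
noncomputable def Lt (a : Q) : Equiv.Perm Q := Equiv.ofBijective (op a) (op_bijective op hQ a)

@[simp] lemma Lt_apply (a x : Q) : Lt op hQ a x = op a x := rfl

lemma Lt_mem_translations (a : Q) : Lt op hQ a ∈ translations op := ⟨a, fun _ => rfl⟩

lemma translations_eq (f : Equiv.Perm Q) (hf : f ∈ translations op) :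
    ∃ a, f = Lt op hQ a := by
  obtain ⟨a, ha⟩ := hf
  exact ⟨a, Equiv.ext fun x => ha x⟩

lemma Lt_mem_LMlt (a : Q) : Lt op hQ a ∈ LMlt op :=
  Subgroup.subset_closure (Lt_mem_translations op hQ a)

lemma Lt_fix (e : Q) : Lt op hQ e e = e := hQ.1 e

lemma Lt_inv_fix (e : Q) : (Lt op hQ e)⁻¹ e = e := by
  have := (Lt op hQ e).injective (a₁ := (Lt op hQ e)⁻¹ e) (a₂ := e)
  apply this
  rw [show (Lt op hQ e) ((Lt op hQ e)⁻¹ e) = e from (Lt op hQ e).apply_symm_apply e, Lt_fix]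

lemma Lt_mul (a b : Q) :
    Lt op hQ a * Lt op hQ b = Lt op hQ (op a b) * Lt op hQ a := by
  ext x
  simp only [Equiv.Perm.mul_apply, Lt_apply]
  exact hQ.2.1 a b x

/-- Conjugation by any element of `LMlt` sends `L_a` to `L_{h a}`. -/
lemma conj_Lt' {h : Equiv.Perm Q} (hh : h ∈ LMlt op) :
    ∀ a : Q, h * Lt op hQ a * h⁻¹ = Lt op hQ (h a) := by
  induction hh using Subgroup.closure_induction with
  | mem f hf =>
    intro a
    obtain ⟨b, rfl⟩ := translations_eq op hQ f hf
    rw [Lt_mul op hQ b a, mul_assoc, mul_inv_cancel, mul_one, Lt_apply]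
  | one => simp
  | mul f g hf hg ihf ihg =>
    intro a
    have : f * g * Lt op hQ a * (f * g)⁻¹ = f * (g * Lt op hQ a * g⁻¹) * f⁻¹ := by group
    rw [this, ihg, ihf]
    rfl
  | inv f hf ihf =>
    intro a
    have h1 : f * Lt op hQ (f⁻¹ a) * f⁻¹ = Lt op hQ (f (f⁻¹ a)) := ihf (f⁻¹ a)
    rw [show f (f⁻¹ a) = a from f.apply_symm_apply a] at h1
    rw [← h1]
    group

lemma conj_Lt {h : Equiv.Perm Q} (hh : h ∈ LMlt op) (a : Q) :
    h * Lt op hQ a * h⁻¹ = Lt op hQ (h a) := conj_Lt' op hQ hh a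

omit hQ in
lemma Dis_le_LMlt : Dis op ≤ LMlt op := by
  apply Subgroup.closure_le (LMlt op) |>.mpr
  rintro f ⟨g, hg, h, hh, rfl⟩
  exact mul_mem (Subgroup.subset_closure hg) (inv_mem (Subgroup.subset_closure hh))

lemma conj_mem_Dis {h d : Equiv.Perm Q} (hh : h ∈ LMlt op) (hd : d ∈ Dis op) :
    h * d * h⁻¹ ∈ Dis op := by
  induction hd using Subgroup.closure_induction with
  | mem f hf =>
    obtain ⟨g, hg, k, hk, rfl⟩ := hf
    obtain ⟨a, rfl⟩ := translations_eq op hQ g hg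
    obtain ⟨b, rfl⟩ := translations_eq op hQ k hk
    have : h * (Lt op hQ a * (Lt op hQ b)⁻¹) * h⁻¹ =
        (h * Lt op hQ a * h⁻¹) * (h * Lt op hQ b * h⁻¹)⁻¹ := by group
    rw [this, conj_Lt op hQ hh a, conj_Lt op hQ hh b]
    exact Subgroup.subset_closure
      ⟨Lt op hQ (h a), Lt_mem_translations op hQ _, Lt op hQ (h b),
        Lt_mem_translations op hQ _, rfl⟩
  | one => simpa using one_mem (Dis op)
  | mul f g hf hg ihf ihg =>
    have : h * (f * g) * h⁻¹ = (h * f * h⁻¹) * (h * g * h⁻¹) := by group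
    rw [this]; exact mul_mem ihf ihg
  | inv f hf ihf =>
    have : h * f⁻¹ * h⁻¹ = (h * f * h⁻¹)⁻¹ := by group
    rw [this]; exact inv_mem ihf

/-- Orbits of `LMlt` and `Dis` coincide on a quandle. -/
lemma dis_reaches (e : Q) {h : Equiv.Perm Q} (hh : h ∈ LMlt op) :
    ∃ d ∈ Dis op, d e = h e := by
  induction hh using Subgroup.closure_induction with
  | mem f hf =>
    obtain ⟨a, rfl⟩ := translations_eq op hQ f hf
    refine ⟨Lt op hQ a * (Lt op hQ e)⁻¹, Subgroup.subset_closure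
      ⟨Lt op hQ a, Lt_mem_translations op hQ _, Lt op hQ e,
        Lt_mem_translations op hQ _, rfl⟩, ?_⟩
    simp [Lt_inv_fix op hQ e]
    exact congrArg (op a) (Lt_inv_fix op hQ e)
  | one => exact ⟨1, one_mem _, rfl⟩
  | mul f g hf hg ihf ihg =>
    obtain ⟨df, hdf, hdfe⟩ := ihf
    obtain ⟨dg, hdg, hdge⟩ := ihg
    refine ⟨f * dg * f⁻¹ * df, mul_mem (conj_mem_Dis op hQ hf hdg) hdf, ?_⟩
    simp only [Equiv.Perm.mul_apply]
    rw [hdfe, show f⁻¹ (f e) = e from f.symm_apply_apply e, hdge]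
  | inv f hf ihf =>
    obtain ⟨d, hd, hde⟩ := ihf
    refine ⟨f⁻¹ * d⁻¹ * f, ?_, ?_⟩
    · have : f⁻¹ * d⁻¹ * f = f⁻¹ * d⁻¹ * (f⁻¹)⁻¹ := by group
      rw [this]
      exact conj_mem_Dis op hQ (inv_mem hf) (inv_mem hd)
    · simp only [Equiv.Perm.mul_apply]
      rw [← hde, show d⁻¹ (d e) = e from d.symm_apply_apply e]

/-- In a medial quandle, the `e`-based displacement generators commute. -/
lemma medial_gen_comm (hM : IsMedial op) (e a c : Q) :
    Commute (Lt op hQ a * (Lt op hQ e)⁻¹) (Lt op hQ c * (Lt op hQ e)⁻¹) := by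
  have key : ∀ b z : Q, op e (op b ((Lt op hQ e)⁻¹ z)) = op (op e b) z := by
    intro b z
    have hz : op e ((Lt op hQ e)⁻¹ z) = z := (Lt op hQ e).apply_symm_apply z
    calc op e (op b ((Lt op hQ e)⁻¹ z))
        = op (op e e) (op b ((Lt op hQ e)⁻¹ z)) := by rw [hQ.1 e]
      _ = op (op e b) (op e ((Lt op hQ e)⁻¹ z)) := hM e e b _
      _ = op (op e b) z := by rw [hz]
  unfold Commute SemiconjBy
  ext x
  simp only [Equiv.Perm.mul_apply, Lt_apply]
  apply (Lt op hQ e).injective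
  show op e _ = op e _
  rw [key a (op c ((Lt op hQ e)⁻¹ x)), key c (op a ((Lt op hQ e)⁻¹ x))]
  exact hM e a c ((Lt op hQ e)⁻¹ x)

/-- In a medial quandle, the displacement group is commutative. -/
lemma medial_dis_comm (hM : IsMedial op) (e : Q) {d₁ d₂ : Equiv.Perm Q}
    (h₁ : d₁ ∈ Dis op) (h₂ : d₂ ∈ Dis op) : Commute d₁ d₂ := by
  set S : Set (Equiv.Perm Q) := { f | ∃ a, f = Lt op hQ a * (Lt op hQ e)⁻¹ } with hS
  have hle : Dis op ≤ Subgroup.closure S := by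
    apply Subgroup.closure_le (Subgroup.closure S) |>.mpr
    rintro f ⟨g, hg, h, hh, rfl⟩
    obtain ⟨a, rfl⟩ := translations_eq op hQ g hg
    obtain ⟨b, rfl⟩ := translations_eq op hQ h hh
    have : Lt op hQ a * (Lt op hQ b)⁻¹ =
        (Lt op hQ a * (Lt op hQ e)⁻¹) * (Lt op hQ b * (Lt op hQ e)⁻¹)⁻¹ := by group
    rw [this]
    exact mul_mem (Subgroup.subset_closure ⟨a, rfl⟩)
      (inv_mem (Subgroup.subset_closure ⟨b, rfl⟩))
  have := Subgroup.closure_induction₂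
    (k := S) (p := fun x y _ _ => Commute x y)
    (fun x y hx hy => by
      obtain ⟨a, rfl⟩ := hx
      obtain ⟨c, rfl⟩ := hy
      exact medial_gen_comm op hQ hM e a c)
    (fun x hx => Commute.one_left x) (fun x hx => Commute.one_right x)
    (fun x y z _ _ _ hxz hyz => hxz.mul_left hyz)
    (fun y z x _ _ _ hxy hxz => hxy.mul_right hxz)
    (fun x y _ _ h => h.inv_left) (fun x y _ _ h => h.inv_right)
    (hle h₁) (hle h₂)
  exact this

/-- Regularity: evaluation at `e` is injective on `Dis` (medial connected case). -/
lemma dis_eval_injective (hM : IsMedial op)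
    (hconn : ∀ x y : Q, ∃ f ∈ LMlt op, f x = y) (e : Q) {d₁ d₂ : Equiv.Perm Q}
    (h₁ : d₁ ∈ Dis op) (h₂ : d₂ ∈ Dis op) (heq : d₁ e = d₂ e) : d₁ = d₂ := by
  ext y
  obtain ⟨f, hf, hfe⟩ := hconn e y
  obtain ⟨d, hd, hde⟩ := dis_reaches op hQ e hf
  rw [hfe] at hde
  have c1 := medial_dis_comm op hQ hM e h₁ hd
  have c2 := medial_dis_comm op hQ hM e h₂ hd
  calc d₁ y = d₁ (d e) := by rw [hde]
    _ = (d₁ * d) e := rfl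
    _ = (d * d₁) e := by rw [c1]
    _ = d (d₁ e) := rfl
    _ = d (d₂ e) := by rw [heq]
    _ = (d * d₂) e := rfl
    _ = (d₂ * d) e := by rw [c2]
    _ = d₂ (d e) := rfl
    _ = d₂ y := by rw [hde]

end Helpers

/-- Corollary 3.4: a connected quandle is medial if and only if it is isomorphic
(as a binary algebra) to an affine quandle `Aff(A, f)`. -/
theorem connected_medial_iff_affine {Q : Type u} [Nonempty Q] (op : Q → Q → Q)
    (hQ : IsQuandle op)
    (hconn : ∀ x y : Q, ∃ f ∈ LMlt op, f x = y) :
    IsMedial op ↔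
      ∃ (A : Type u) (_ : AddCommGroup A) (f : A ≃+ A) (φ : Q ≃ A),
        ∀ x y : Q, φ (op x y) = (φ x - f (φ x)) + f (φ y) := by
  obtain ⟨e⟩ := ‹Nonempty Q›
  constructor
  · intro hM
    letI : CommGroup ↥(Dis op) :=
      { (inferInstance : Group ↥(Dis op)) with
        mul_comm := fun a b => Subtype.ext (medial_dis_comm op hQ hM e a.2 b.2) }
    have hbij : Function.Bijective (fun d : ↥(Dis op) => (d : Equiv.Perm Q) e) := by
      constructor
      · intro d₁ d₂ h
        exact Subtype.ext (dis_eval_injective op hQ hM hconn e d₁.2 d₂.2 h)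
      · intro y
        obtain ⟨f, hf, hfe⟩ := hconn e y
        obtain ⟨d, hd, hde⟩ := dis_reaches op hQ e hf
        exact ⟨⟨d, hd⟩, by show d e = y; rw [hde, hfe]⟩
    let E : ↥(Dis op) ≃ Q := Equiv.ofBijective _ hbij
    have hLe : Lt op hQ e ∈ LMlt op := Lt_mem_LMlt op hQ e
    let conjE : ↥(Dis op) ≃* ↥(Dis op) :=
      { toFun := fun d => ⟨Lt op hQ e * d * (Lt op hQ e)⁻¹, conj_mem_Dis op hQ hLe d.2⟩
        invFun := fun d => ⟨(Lt op hQ e)⁻¹ * d * Lt op hQ e, by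
          have := conj_mem_Dis op hQ (inv_mem hLe) d.2
          simpa using this⟩
        left_inv := fun d => Subtype.ext (by simp [mul_assoc])
        right_inv := fun d => Subtype.ext (by simp [mul_assoc])
        map_mul' := fun d₁ d₂ => Subtype.ext (by
          show Lt op hQ e * (↑d₁ * ↑d₂) * (Lt op hQ e)⁻¹ =
            (Lt op hQ e * ↑d₁ * (Lt op hQ e)⁻¹) * (Lt op hQ e * ↑d₂ * (Lt op hQ e)⁻¹)
          group) }
    have hconjE : ∀ d : ↥(Dis op),
        ((conjE d : ↥(Dis op)) : Equiv.Perm Q) = Lt op hQ e * ↑d * (Lt op hQ e)⁻¹ :=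
      fun _ => rfl
    refine ⟨Additive ↥(Dis op), inferInstance, MulEquiv.toAdditive conjE,
      E.symm.trans Additive.ofMul, ?_⟩
    intro x y
    set gx := E.symm x with hgx
    set gy := E.symm y with hgy
    have hgxe : (gx : Equiv.Perm Q) e = x := E.apply_symm_apply x
    have hgye : (gy : Equiv.Perm Q) e = y := E.apply_symm_apply y
    have key : E.symm (op x y) = gx * (conjE gx)⁻¹ * conjE gy := by
      apply E.injective
      rw [E.apply_symm_apply]
      symm
      show ((gx * (conjE gx)⁻¹ * conjE gy : ↥(Dis op)) : Equiv.Perm Q) e = op x y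
      have hc : (gx : Equiv.Perm Q) * Lt op hQ e * (gx : Equiv.Perm Q)⁻¹ = Lt op hQ x := by
        rw [conj_Lt op hQ (Dis_le_LMlt op gx.2) e, hgxe]
      have hexp : ((gx * (conjE gx)⁻¹ * conjE gy : ↥(Dis op)) : Equiv.Perm Q) =
          ((gx : Equiv.Perm Q) * Lt op hQ e * (gx : Equiv.Perm Q)⁻¹) *
            (gy : Equiv.Perm Q) * (Lt op hQ e)⁻¹ := by
        push_cast [hconjE]
        group
      rw [hexp, hc]
      show Lt op hQ x ((gy : Equiv.Perm Q) ((Lt op hQ e)⁻¹ e)) = op x y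
      rw [Lt_inv_fix op hQ e, hgye, Lt_apply]
    have hf : ∀ g : ↥(Dis op),
        (MulEquiv.toAdditive conjE) (Additive.ofMul g) = Additive.ofMul (conjE g) :=
      fun _ => rfl
    show Additive.ofMul (E.symm (op x y)) = _
    rw [key]
    show Additive.ofMul (gx * (conjE gx)⁻¹ * conjE gy) =
      Additive.ofMul gx - (MulEquiv.toAdditive conjE) (Additive.ofMul gx) +
        (MulEquiv.toAdditive conjE) (Additive.ofMul gy)
    rw [hf, hf]
    simp [ofMul_mul, ofMul_inv, sub_eq_add_neg]
  · rintro ⟨A, _, f, φ, hφ⟩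
    intro x y u v
    apply φ.injective
    rw [hφ, hφ, hφ, hφ, hφ, hφ]
    simp only [map_add, map_sub]
    abel
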